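/- Fix q ∈ ℂ with q ≠ 0 and q ≠ ±1, let n ≥ 1 and fix i ∈ {1,…,n}. If D is a twisted derivation of ℂ[x_1,…,x_n] relative to γ_{q,x_i}, then D = f_i · ∂_{q,x_i} where f_i = D(x_i); that is, D(p) = D(x_i) · ∂_{q,x_i}(p) for every polynomial p. -/

import Mathlib

noncomputable section

open MvPolynomial

/-- The `q`-number `[s]_q = (q^s - q^{-s})/(q - q^{-1})`. -/
def qnum (q : ℂ) (s : ℕ) : ℂ := (q ^ s - q⁻¹ ^ s) / (q - q⁻¹)

/-- The `ℂ`-algebra endomorphism `γ_{q,x_i}` of `ℂ[x_1,…,x_n]` determined by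
`x_i ↦ q·x_i` and `x_j ↦ x_j` for `j ≠ i`.  For `q ≠ 0` it is an automorphism,
with inverse `qGamma q⁻¹ i`. -/
def qGamma (q : ℂ) {n : ℕ} (i : Fin n) :
    MvPolynomial (Fin n) ℂ →ₐ[ℂ] MvPolynomial (Fin n) ℂ :=
  aeval (fun j => if j = i then C q * X i else X j)

/-- The `q`-derivative `∂_{q,x_i}`: the `ℂ`-linear map sending the monomial `x^α` to
`[α_i]_q · x^{α - e_i}` (which is `0` when `α_i = 0`, since `[0]_q = 0`). -/
def qDeriv (q : ℂ) {n : ℕ} (i : Fin n) (p : MvPolynomial (Fin n) ℂ) :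
    MvPolynomial (Fin n) ℂ :=
  ∑ α ∈ p.support, monomial (α - Finsupp.single i 1) (qnum q (α i) * coeff α p)

lemma qsub_ne (q : ℂ) (hq0 : q ≠ 0) (hq1 : q ≠ 1) (hqm1 : q ≠ -1) : q - q⁻¹ ≠ 0 := by
  intro h
  have h' : q = q⁻¹ := sub_eq_zero.mp h
  have : q * q = 1 := by nth_rewrite 2 [h']; exact mul_inv_cancel₀ hq0
  rcases mul_self_eq_one_iff.mp this with h1 | h1
  exacts [hq1 h1, hqm1 h1]

lemma qnum_zero (q : ℂ) : qnum q 0 = 0 := by simp [qnum]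

lemma qnum_one (q : ℂ) (h : q - q⁻¹ ≠ 0) : qnum q 1 = 1 := by
  simp only [qnum, pow_one]; exact div_self h

lemma qnum_succ (q : ℂ) (h : q - q⁻¹ ≠ 0) (s : ℕ) :
    qnum q (s + 1) = q * qnum q s + q⁻¹ ^ s := by
  have key : q ^ (s + 1) - q⁻¹ ^ (s + 1) = q * (q ^ s - q⁻¹ ^ s) + q⁻¹ ^ s * (q - q⁻¹) := by
    ring
  rw [qnum, qnum, key, add_div, mul_div_assoc, mul_div_assoc, div_self h, mul_one]

lemma qDeriv_sum_subset (q : ℂ) {n : ℕ} (i : Fin n) {p : MvPolynomial (Fin n) ℂ}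
    {s : Finset ((Fin n) →₀ ℕ)} (h : p.support ⊆ s) :
    qDeriv q i p = ∑ α ∈ s, monomial (α - Finsupp.single i 1) (qnum q (α i) * coeff α p) := by
  rw [qDeriv]
  exact Finset.sum_subset h (fun α _ hα => by
    rw [notMem_support_iff] at hα; simp [hα])

lemma qDeriv_add (q : ℂ) {n : ℕ} (i : Fin n) (p r : MvPolynomial (Fin n) ℂ) :
    qDeriv q i (p + r) = qDeriv q i p + qDeriv q i r := by
  classical
  set s := p.support ∪ r.support ∪ (p + r).support with hs
  rw [qDeriv_sum_subset q i (show (p + r).support ⊆ s from Finset.subset_union_right),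
    qDeriv_sum_subset q i (show p.support ⊆ s from
      (Finset.subset_union_left).trans Finset.subset_union_left),
    qDeriv_sum_subset q i (show r.support ⊆ s from
      (Finset.subset_union_right).trans Finset.subset_union_left),
    ← Finset.sum_add_distrib]
  exact Finset.sum_congr rfl fun α _ => by rw [coeff_add, mul_add, map_add]

lemma qDeriv_smul (q : ℂ) {n : ℕ} (i : Fin n) (c : ℂ) (p : MvPolynomial (Fin n) ℂ) :
    qDeriv q i (c • p) = c • qDeriv q i p := by
  rw [qDeriv_sum_subset q i (MvPolynomial.support_smul : (c • p).support ⊆ p.support),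
    qDeriv, Finset.smul_sum]
  exact Finset.sum_congr rfl fun α _ => by
    rw [coeff_smul, smul_eq_mul, MvPolynomial.smul_monomial, smul_eq_mul]
    ring_nf

def qDerivL (q : ℂ) {n : ℕ} (i : Fin n) :
    MvPolynomial (Fin n) ℂ →ₗ[ℂ] MvPolynomial (Fin n) ℂ where
  toFun := qDeriv q i
  map_add' := qDeriv_add q i
  map_smul' := qDeriv_smul q i

lemma qDeriv_monomial (q : ℂ) {n : ℕ} (i : Fin n) (α : (Fin n) →₀ ℕ) (c : ℂ) :
    qDeriv q i (monomial α c) = monomial (α - Finsupp.single i 1) (qnum q (α i) * c) := by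
  rcases eq_or_ne c 0 with rfl | hc
  · simp [qDeriv]
  · rw [qDeriv, support_monomial, if_neg hc, Finset.sum_singleton, coeff_monomial, if_pos rfl]

lemma fs1 {n : ℕ} {i j : Fin n} (hji : j ≠ i) (α : (Fin n) →₀ ℕ) :
    (α + Finsupp.single j 1) - Finsupp.single i 1
      = (α - Finsupp.single i 1) + Finsupp.single j 1 := by
  ext k
  simp only [Finsupp.add_apply, Finsupp.tsub_apply, Finsupp.single_apply]
  split_ifs with h1 h2 <;> first | omega | exact absurd (h1.trans h2.symm) hji

lemma fs3 {n : ℕ} {i : Fin n} {α : (Fin n) →₀ ℕ} (h : α i ≠ 0) :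
    (α - Finsupp.single i 1) + Finsupp.single i 1 = α := by
  ext k
  rcases eq_or_ne k i with rfl | hk
  · simp only [Finsupp.add_apply, Finsupp.tsub_apply, Finsupp.single_eq_same]
    omega
  · simp [Finsupp.add_apply, Finsupp.tsub_apply, Finsupp.single_eq_of_ne' (Ne.symm hk)]

lemma qGamma_monomial (q : ℂ) {n : ℕ} (i : Fin n) (α : (Fin n) →₀ ℕ) (c : ℂ) :
    qGamma q i (monomial α c) = monomial α (q ^ (α i) * c) := by
  rw [qGamma, aeval_monomial]
  have key : (α.prod fun j e => (if j = i then C q * X i else X j) ^ e)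
      = C (q ^ α i) * α.prod fun j e => (X j : MvPolynomial (Fin n) ℂ) ^ e := by
    rw [Finsupp.prod, Finsupp.prod]
    by_cases hi : i ∈ α.support
    · rw [← Finset.prod_erase_mul _ _ hi, ← Finset.prod_erase_mul _ _ hi,
        Finset.prod_congr rfl (fun j hj => by
          rw [if_neg (Finset.ne_of_mem_erase hj)] :
          ∀ j ∈ α.support.erase i, (if j = i then C q * X i else X j) ^ α j = X j ^ α j),
        if_pos rfl, mul_pow, ← C_pow]
      ring
    · have h0 : α i = 0 := Finsupp.notMem_support_iff.mp hi
      rw [h0, pow_zero, C_1, one_mul]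
      exact Finset.prod_congr rfl fun j hj => by
        rw [if_neg (by rintro rfl; exact hi hj)]
  rw [key, monomial_eq, MvPolynomial.algebraMap_eq, C_mul]
  ring

lemma qGamma_X_self (q : ℂ) {n : ℕ} (i : Fin n) : qGamma q i (X i) = C q * X i := by
  simp [qGamma]

lemma qGamma_X_ne (q : ℂ) {n : ℕ} {i j : Fin n} (h : j ≠ i) : qGamma q i (X j) = X j := by
  simp [qGamma, h]

lemma lemA (q : ℂ) {n : ℕ} {i j : Fin n} (hji : j ≠ i) (p : MvPolynomial (Fin n) ℂ) :
    qDeriv q i (p * X j) = qDeriv q i p * X j := by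
  have hX : (X j : MvPolynomial (Fin n) ℂ) = monomial (Finsupp.single j 1) 1 := rfl
  conv_lhs => rw [p.as_sum, Finset.sum_mul]
  rw [show qDeriv q i = ⇑(qDerivL q i) from rfl, map_sum]
  conv_rhs => rw [p.as_sum, map_sum, Finset.sum_mul]
  refine Finset.sum_congr rfl fun α _ => ?_
  show qDeriv q i _ = qDeriv q i _ * X j
  rw [hX, monomial_mul, mul_one, qDeriv_monomial, qDeriv_monomial, monomial_mul, mul_one,
    fs1 hji, Finsupp.add_apply, Finsupp.single_eq_of_ne' hji, add_zero]

lemma lemB (q : ℂ) (hq0 : q ≠ 0) (h : q - q⁻¹ ≠ 0) {n : ℕ} (i : Fin n)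
    (p : MvPolynomial (Fin n) ℂ) :
    qDeriv q i (p * X i) = C q * qDeriv q i p * X i + qGamma q⁻¹ i p := by
  have hX : (X i : MvPolynomial (Fin n) ℂ) = monomial (Finsupp.single i 1) 1 := rfl
  conv_lhs => rw [p.as_sum, Finset.sum_mul]
  rw [show qDeriv q i = ⇑(qDerivL q i) from rfl, map_sum]
  conv_rhs => rw [p.as_sum, map_sum, map_sum, Finset.mul_sum, Finset.sum_mul,
    ← Finset.sum_add_distrib]
  refine Finset.sum_congr rfl fun α _ => ?_
  show qDeriv q i _ = C q * qDeriv q i _ * X i + qGamma q⁻¹ i _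
  rw [hX, monomial_mul, mul_one, qDeriv_monomial, qDeriv_monomial, qGamma_monomial,
    Finsupp.add_apply, Finsupp.single_eq_same, add_tsub_cancel_right]
  rcases eq_or_ne (α i) 0 with h0 | h0
  · simp [h0, qnum_zero, qnum_one q h]
  · rw [C_mul_monomial, monomial_mul, mul_one, fs3 h0, ← map_add, qnum_succ q h]
    ring_nf

/-- if `D` is a twisted derivation of `ℂ[x_1,…,x_n]` relative to
`γ_{q,x_i}`, then `D = D(x_i) · ∂_{q,x_i}`. -/
theorem stmt5 (q : ℂ) (hq0 : q ≠ 0) (hq1 : q ≠ 1) (hqm1 : q ≠ -1)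
    (n : ℕ) (i : Fin n)
    (D : MvPolynomial (Fin n) ℂ →ₗ[ℂ] MvPolynomial (Fin n) ℂ)
    (hD : ∀ a b : MvPolynomial (Fin n) ℂ,
      D (a * b) = D a * qGamma q i b + qGamma q⁻¹ i a * D b) :
    ∀ p : MvPolynomial (Fin n) ℂ, D p = D (X i) * qDeriv q i p := by
  have hsub : q - q⁻¹ ≠ 0 := qsub_ne q hq0 hq1 hqm1
  have hq0' : q⁻¹ ≠ 0 := inv_ne_zero hq0
  have hD1 : D 1 = 0 := by
    have h1 := hD 1 1
    simp only [mul_one, map_one, one_mul] at h1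
    exact (left_eq_add.mp h1)
  have hDC : ∀ a : ℂ, D (C a) = 0 := fun a => by
    rw [show (C a : MvPolynomial (Fin n) ℂ) = a • 1 by rw [smul_eq_C_mul, mul_one],
      map_smul, hD1, smul_zero]
  have hDX : ∀ j : Fin n, j ≠ i → D (X j) = 0 := by
    intro j hj
    have h1 := hD (X i) (X j)
    have h2 := hD (X j) (X i)
    rw [mul_comm (X j) (X i)] at h2
    rw [qGamma_X_ne q hj, qGamma_X_self q⁻¹ i] at h1
    rw [qGamma_X_self q i, qGamma_X_ne q⁻¹ hj] at h2
    have key : (C q⁻¹ - C q) * X i * D (X j) = 0 := by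
      linear_combination h2 - h1
    rcases mul_eq_zero.mp key with hk | hk
    · exfalso
      rcases mul_eq_zero.mp hk with hk' | hk'
      · rw [← C_sub] at hk'
        have h0 : q⁻¹ - q = 0 := C_injective (Fin n) ℂ (by rw [hk', map_zero])
        exact hsub (by rw [← neg_sub q⁻¹ q, h0, neg_zero])
      · exact MvPolynomial.X_ne_zero i hk'
    · exact hk
  intro p
  induction p using MvPolynomial.induction_on with
  | C a =>
      rw [hDC a, show qDeriv q i (C a) = 0 by
        rw [C_apply, qDeriv_monomial]; simp [qnum_zero], mul_zero]
  | add p r hp hr =>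
      rw [map_add, hp, hr, qDeriv_add, mul_add]
  | mul_X p j hp =>
      by_cases hj : j = i
      · subst hj
        rw [hD, qGamma_X_self, lemB q hq0 hsub, hp]
        ring
      · rw [hD, qGamma_X_ne q hj, hDX j hj, mul_zero, add_zero, hp, lemA q hj, mul_assoc]
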